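/- Let G be a finite abelian group of m×m unitary monomial matrices, λ : G → ℂ∖{0} a group homomorphism, and Ψ = ∑_{ν∈T(m,n)} c_ν e_ν a vector in the joint eigenspace V_λ^G = {w : B_n(g) w = λ(g) w for all g ∈ G}. Then for every g ∈ G and every ν ∈ T(m,n), |c_{ν∘π_g}| = |c_ν|; i.e., the modulus of the coefficient of Ψ is constant on each orbit {ν∘π_g : g ∈ G}. -/

import Mathlib

namespace BSF

variable {α : Type*} [Fintype α] [DecidableEq α]

/-- The canonical list in which each index `i` is repeated `ν i` times. -/
noncomputable def repList (ν : α → ℕ) : List α :=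
  Finset.univ.toList.flatMap fun i => List.replicate (ν i) i

set_option linter.unusedSectionVars false in
lemma repList_length (ν : α → ℕ) : (repList ν).length = ∑ i, ν i := by
  simp [repList, List.length_flatMap]

/-- The index set `T(m,n)`: occupation-number tuples with total `n`. -/
def BosonIdx (α : Type*) [Fintype α] (n : ℕ) := {ν : α → ℕ // ∑ i, ν i = n}

instance {n : ℕ} : DecidableEq (BosonIdx α n) :=
  inferInstanceAs (DecidableEq {ν : α → ℕ // ∑ i, ν i = n})

noncomputable instance {n : ℕ} : Fintype (BosonIdx α n) :=
  Fintype.ofInjective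
    (fun ν : BosonIdx α n => fun i : α =>
      (⟨ν.1 i, by
        have h := Finset.single_le_sum (f := ν.1) (fun j _ => Nat.zero_le _) (Finset.mem_univ i)
        rw [ν.2] at h
        omega⟩ : Fin (n + 1)))
    (fun a b hab => Subtype.ext (funext fun i => congrArg Fin.val (congrFun hab i)))

/-- The permanent of a square complex matrix. -/
noncomputable def permanent {n : ℕ} (M : Matrix (Fin n) (Fin n) ℂ) : ℂ :=
  ∑ σ : Equiv.Perm (Fin n), ∏ i, M (σ i) i

/-- The canonical repetition function associated with an occupation tuple. -/
noncomputable def repFun {n : ℕ} (ν : BosonIdx α n) : Fin n → α :=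
  fun k => (repList ν.1).get (Fin.cast ((repList_length ν.1).trans ν.2).symm k)

/-- The `n`-boson representation of a matrix `S`. -/
noncomputable def bosonRep (n : ℕ) (S : Matrix α α ℂ) :
    Matrix (BosonIdx α n) (BosonIdx α n) ℂ :=
  Matrix.of fun ν ν' =>
    permanent (Matrix.of fun k l => S (repFun ν k) (repFun ν' l)) /
      (Real.sqrt ((∏ i, (ν.1 i).factorial * (ν'.1 i).factorial : ℕ) : ℝ) : ℂ)

/-- Relabeling an occupation tuple by (precomposition with) a permutation of the modes. -/
def permIdx {n : ℕ} (σ : Equiv.Perm α) (ν : BosonIdx α n) : BosonIdx α n :=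
  ⟨ν.1 ∘ σ, show ∑ i, ν.1 (σ i) = n from (Equiv.sum_comp σ ν.1).trans ν.2⟩

/- ## Auxiliary lemmas -/

set_option linter.unusedSectionVars false in
lemma count_repList (ν : α → ℕ) (i : α) : (repList ν).count i = ν i := by
  simp [repList, List.count_flatMap, List.count_replicate, Function.comp]

set_option linter.unusedSectionVars false in
lemma card_fiber_repFun {n : ℕ} (ν : BosonIdx α n) (i : α) :
    (Finset.univ.filter fun k => repFun ν k = i).card = ν.1 i := by
  have hv : (repList ν.1).length = n := (repList_length ν.1).trans ν.2
  have h := Fin.card_filter_univ_eq_vector_get_eq_count i (⟨repList ν.1, hv⟩ : List.Vector α n)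
  rw [← count_repList ν.1 i,
    show (List.count i (repList ν.1)) = List.count i (List.Vector.toList ⟨repList ν.1, hv⟩)
      from rfl, ← h]
  congr 1

set_option linter.unusedSectionVars false in
lemma permanent_monomial {n : ℕ} (f t : Fin n → α) (w : Fin n → ℂ) :
    permanent (Matrix.of fun k l => if f k = t l then w l else 0) =
      (Fintype.card {σ : Equiv.Perm (Fin n) // f ∘ ⇑σ = t} : ℂ) * ∏ l, w l := by
  unfold permanent
  have h1 : ∀ σ : Equiv.Perm (Fin n),
      (∏ i, Matrix.of (fun k l => if f k = t l then w l else 0) (σ i) i)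
        = if f ∘ ⇑σ = t then ∏ l, w l else 0 := by
    intro σ
    by_cases h : f ∘ ⇑σ = t
    · rw [if_pos h]
      refine Finset.prod_congr rfl fun i _ => ?_
      simp only [Matrix.of_apply]
      exact if_pos (congrFun h i)
    · rw [if_neg h]
      obtain ⟨l, hl⟩ : ∃ l, f (σ l) ≠ t l := by
        by_contra hc; push_neg at hc; exact h (funext hc)
      exact Finset.prod_eq_zero (Finset.mem_univ l) (by simp [Matrix.of_apply, hl])
  rw [Finset.sum_congr rfl fun σ _ => h1 σ, Finset.sum_ite, Finset.sum_const,
    Finset.sum_const_zero, add_zero, Fintype.card_subtype, nsmul_eq_mul]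

set_option linter.unusedSectionVars false in
lemma card_filter_comp_perm {n : ℕ} (σ : Equiv.Perm (Fin n)) (p : Fin n → Prop)
    [DecidablePred p] :
    (Finset.univ.filter fun l => p (σ l)).card = (Finset.univ.filter p).card := by
  rw [← Fintype.card_subtype, ← Fintype.card_subtype]
  exact Fintype.card_congr (σ.subtypeEquiv fun _ => Iff.rfl)

set_option linter.unusedSectionVars false in
lemma exists_perm_comp {n : ℕ} (f t : Fin n → α)
    (h : ∀ i, (Finset.univ.filter fun k => f k = i).card
            = (Finset.univ.filter fun l => t l = i).card) :
    ∃ τ : Equiv.Perm (Fin n), f ∘ ⇑τ = t := by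
  have hcard : ∀ i : α, Fintype.card {l // t l = i} = Fintype.card {k // f k = i} := by
    intro i; rw [Fintype.card_subtype, Fintype.card_subtype, h]
  refine ⟨(Equiv.sigmaFiberEquiv t).symm.trans
    ((Equiv.sigmaCongrRight fun i => Fintype.equivOfCardEq (hcard i)).trans
      (Equiv.sigmaFiberEquiv f)), funext fun k => ?_⟩
  have h2 : ∀ (s : Σ i : α, {k // f k = i}), f ((Equiv.sigmaFiberEquiv f) s) = s.1 :=
    fun s => s.2.2
  simp only [Function.comp_apply, Equiv.trans_apply, h2]
  simp [Equiv.sigmaFiberEquiv]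

set_option linter.unusedSectionVars false in
lemma card_perm_comp {n : ℕ} (f t : Fin n → α)
    (h : ∀ i, (Finset.univ.filter fun k => f k = i).card
            = (Finset.univ.filter fun l => t l = i).card) :
    Fintype.card {σ : Equiv.Perm (Fin n) // f ∘ ⇑σ = t}
      = ∏ i, Nat.factorial (Finset.univ.filter fun l => t l = i).card := by
  obtain ⟨τ, hτ⟩ := exists_perm_comp f t h
  have key : ∀ σ : Equiv.Perm (Fin n), t ∘ ⇑(τ⁻¹ * σ) = f ∘ ⇑σ := by
    intro σ; funext x
    simp only [Function.comp_apply, Equiv.Perm.mul_apply, ← hτ]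
    simp
  have hc : Fintype.card {σ : Equiv.Perm (Fin n) // f ∘ ⇑σ = t}
      = Fintype.card {σ : Equiv.Perm (Fin n) // t ∘ ⇑σ = t} := by
    refine Fintype.card_congr (Equiv.subtypeEquiv (Equiv.mulLeft τ⁻¹) fun σ => ?_)
    rw [Equiv.coe_mulLeft, key σ]
  rw [hc, DomMulAct.stabilizer_card t]
  exact Finset.prod_congr rfl fun i _ => by rw [Fintype.card_subtype]

/-- (Eq. (6) of the paper.) For a vector `Ψ` in a joint eigenspace of the
boson representation of a finite abelian group of unitary monomial matrices, the modulus of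
its coefficients is constant on every orbit `{ν ∘ π_g : g ∈ G}`. -/
theorem orbit_constant_modulus {m n : ℕ} (hn : 0 < n)
    {G : Type*} [CommGroup G] [Fintype G]
    (ρ : G →* Matrix (Fin m) (Fin m) ℂ)
    (π : G → Equiv.Perm (Fin m)) (d : G → Fin m → ℂ)
    (hd : ∀ g i, ‖d g i‖ = 1)
    (hρ : ∀ g i j, ρ g j i = if j = π g i then d g i else 0)
    (lam : G →* ℂˣ)
    (Ψ : BosonIdx (Fin m) n → ℂ)
    (hΨ : ∀ g : G, (bosonRep n (ρ g)).mulVec Ψ = (lam g : ℂ) • Ψ) :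
    ∀ (g : G) (ν : BosonIdx (Fin m) n),
      ‖Ψ (permIdx (π g) ν)‖ = ‖Ψ ν‖ := by
  intro g ν
  classical
  set e := π g with he
  set ν₀ := permIdx e ν with hν₀
  -- rewrite entry matrices into monomial form
  have hmat : ∀ ν' : BosonIdx (Fin m) n,
      (Matrix.of fun k l => (ρ g) (repFun ν k) (repFun ν' l))
        = Matrix.of fun k l =>
            if repFun ν k = e (repFun ν' l) then d g (repFun ν' l) else 0 := by
    intro ν'
    ext k l
    simp only [Matrix.of_apply]
    exact hρ g (repFun ν' l) (repFun ν k)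
  -- fiber counts of t := e ∘ repFun ν'
  have ht : ∀ (ν' : BosonIdx (Fin m) n) (i : Fin m),
      (Finset.univ.filter fun l => e (repFun ν' l) = i).card = ν'.1 (e.symm i) := by
    intro ν' i
    rw [show (Finset.univ.filter fun l => e (repFun ν' l) = i)
        = (Finset.univ.filter fun l => repFun ν' l = e.symm i) from
      Finset.filter_congr fun l _ => by
        simp [Equiv.apply_eq_iff_eq_symm_apply]]
    exact card_fiber_repFun ν' (e.symm i)
  -- off-"diagonal" entries vanish
  have hzero : ∀ ν' : BosonIdx (Fin m) n, ν' ≠ ν₀ → bosonRep n (ρ g) ν ν' = 0 := by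
    intro ν' hne
    have hcard : Fintype.card
        {σ : Equiv.Perm (Fin n) // repFun ν ∘ ⇑σ = fun l => e (repFun ν' l)} = 0 := by
      rw [Fintype.card_eq_zero_iff]
      constructor
      rintro ⟨σ, hσ⟩
      apply hne
      refine Subtype.ext (funext fun j => ?_)
      have h1 : ∀ i : Fin m, ν'.1 (e.symm i) = ν.1 i := by
        intro i
        have e1 : (Finset.univ.filter fun l => e (repFun ν' l) = i)
            = (Finset.univ.filter fun l => repFun ν (σ l) = i) := by
          refine Finset.filter_congr fun l _ => ?_
          rw [← congrFun hσ l]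
          rfl
        have e2 := card_filter_comp_perm σ (fun k => repFun ν k = i)
        rw [← ht ν' i, e1, e2, card_fiber_repFun ν i]
      have h2 := h1 (e j)
      rwa [Equiv.symm_apply_apply] at h2
    rw [bosonRep]
    simp only [Matrix.of_apply]
    rw [hmat ν', permanent_monomial (repFun ν) (fun l => e (repFun ν' l))
      (fun l => d g (repFun ν' l)), hcard]
    simp
  -- the diagonal entry has modulus 1
  have hcards : ∀ i : Fin m,
      (Finset.univ.filter fun k => repFun ν k = i).card
        = (Finset.univ.filter fun l => e (repFun ν₀ l) = i).card := by
    intro i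
    rw [ht ν₀ i, card_fiber_repFun ν i]
    show ν.1 i = ν.1 (e (e.symm i))
    rw [Equiv.apply_symm_apply]
  have hN : Fintype.card
      {σ : Equiv.Perm (Fin n) // repFun ν ∘ ⇑σ = fun l => e (repFun ν₀ l)}
        = ∏ i, Nat.factorial (ν.1 i) := by
    rw [card_perm_comp _ _ hcards]
    refine Finset.prod_congr rfl fun i _ => ?_
    rw [ht ν₀ i]
    show Nat.factorial (ν.1 (e (e.symm i))) = _
    rw [Equiv.apply_symm_apply]
  set N : ℕ := ∏ i, Nat.factorial (ν.1 i) with hNdef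
  have hNpos : 0 < N := Finset.prod_pos fun i _ => Nat.factorial_pos _
  have hdenom : (∏ i, (ν.1 i).factorial * (ν₀.1 i).factorial) = N * N := by
    rw [Finset.prod_mul_distrib]
    congr 1
    exact Equiv.prod_comp e fun i => (ν.1 i).factorial
  have hsqrt : Real.sqrt ((∏ i, (ν.1 i).factorial * (ν₀.1 i).factorial : ℕ) : ℝ)
      = (N : ℝ) := by
    rw [hdenom]
    push_cast
    exact Real.sqrt_mul_self (by positivity)
  have habsB : ‖bosonRep n (ρ g) ν ν₀‖ = 1 := by
    rw [bosonRep]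
    simp only [Matrix.of_apply]
    rw [hmat ν₀, permanent_monomial (repFun ν) (fun l => e (repFun ν₀ l))
      (fun l => d g (repFun ν₀ l)), hN, hsqrt]
    rw [norm_div, norm_mul]
    have hD : ‖∏ l, d g (repFun ν₀ l)‖ = 1 := by
      rw [norm_prod]
      simp [hd]
    rw [hD]
    rw [mul_one, Complex.norm_natCast, Complex.norm_real, Real.norm_natCast]
    field_simp
  -- |lam g| = 1
  have hlam : ‖((lam g : ℂˣ) : ℂ)‖ = 1 := by
    have hg : g ^ Fintype.card G = 1 := pow_card_eq_one
    have h1 : ((lam g : ℂˣ) : ℂ) ^ Fintype.card G = 1 := by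
      rw [← Units.val_pow_eq_pow_val, ← map_pow, hg, map_one, Units.val_one]
    have h2 : ‖((lam g : ℂˣ) : ℂ)‖ ^ Fintype.card G = 1 := by
      rw [← norm_pow, h1, norm_one]
    have hk : Fintype.card G ≠ 0 := Fintype.card_ne_zero
    set x := ‖((lam g : ℂˣ) : ℂ)‖
    have hx : 0 ≤ x := norm_nonneg _
    rcases lt_trichotomy x 1 with h3 | h3 | h3
    · have := pow_lt_one₀ hx h3 hk; simp [h2] at this
    · exact h3
    · have := one_lt_pow₀ h3 hk; simp [h2] at this
  -- assemble
  have hmv := congrFun (hΨ g) ν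
  rw [Matrix.mulVec, dotProduct] at hmv
  rw [Finset.sum_eq_single ν₀ (fun b _ hb => by rw [hzero b hb, zero_mul])
    (fun hb => absurd (Finset.mem_univ ν₀) hb)] at hmv
  have := congrArg (‖·‖) hmv
  rw [norm_mul, habsB, one_mul] at this
  rw [this]
  simp only [Pi.smul_apply, smul_eq_mul, norm_mul, hlam, one_mul]

end BSF
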